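/- Let k₁, …, k_d be integers with each k_i ≥ 3, and define θ_{k}(l) = 2·arcsin( cos(π/k) / cosh(l/2) ) for l ≥ 0. If ∑_{i=1}^{d} (k_i - 2)π / k_i > 2π, then there exists a unique l > 0 such that ∑_{i=1}^{d} θ_{k_i}(l) = 2π. -/

import Mathlib

open Real Filter

/-- If the Euclidean angle sum of the type vector `[k₁,…,k_d]` exceeds `2π`,
there exists a unique side length `l > 0` such that the hyperbolic interior angles
sum to `2π`. -/
theorem hyperbolic_side_length_exists_unique (d : ℕ) (k : Fin d → ℕ) (hk : ∀ i, 3 ≤ k i)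
    (hsum : 2 * π < ∑ i, ((k i : ℝ) - 2) * π / (k i : ℝ)) :
    ∃! l : ℝ, 0 < l ∧
      ∑ i, 2 * arcsin (cos (π / (k i : ℝ)) / cosh (l / 2)) = 2 * π := by
  have hd : 0 < d := by
    rcases Nat.eq_zero_or_pos d with h | h
    · subst h; simp at hsum; linarith [pi_pos]
    · exact h
  set f : ℝ → ℝ := fun l => ∑ i, 2 * arcsin (cos (π / (k i : ℝ)) / cosh (l / 2)) with hf
  have hkpos : ∀ i, (0:ℝ) < (k i : ℝ) := fun i => by
    exact_mod_cast lt_of_lt_of_le (by norm_num) (hk i)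
  have hang : ∀ i, 0 < π / (k i : ℝ) ∧ π / (k i : ℝ) ≤ π / 3 := fun i => by
    constructor
    · exact div_pos pi_pos (hkpos i)
    · apply div_le_div_of_nonneg_left pi_pos.le (by norm_num)
      exact_mod_cast hk i
  have hcos : ∀ i, 0 < cos (π / (k i : ℝ)) := fun i => by
    apply cos_pos_of_mem_Ioo
    constructor
    · linarith [(hang i).1, pi_pos]
    · linarith [(hang i).2, pi_pos]
  have hcos1 : ∀ i, cos (π / (k i : ℝ)) ≤ 1 := fun i => cos_le_one _
  -- membership of the arcsin argument in [-1,1]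
  have hmem : ∀ (i) (x : ℝ), cos (π / (k i : ℝ)) / cosh x ∈ Set.Icc (-1:ℝ) 1 := by
    intro i x
    have h1 : (1:ℝ) ≤ cosh x := one_le_cosh x
    constructor
    · have : 0 ≤ cos (π / (k i : ℝ)) / cosh x := div_nonneg (hcos i).le (by linarith)
      linarith
    · rw [div_le_one (by linarith)]
      linarith [hcos1 i]
  -- f is strictly antitone on [0,∞)
  have hanti : StrictAntiOn f (Set.Ici (0:ℝ)) := by
    intro a ha b hb hab
    apply Finset.sum_lt_sum_of_nonempty
    · exact Finset.univ_nonempty_iff.mpr ⟨⟨0, hd⟩⟩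
    · intro i _
      have hch : cosh (a/2) < cosh (b/2) := by
        rw [Real.cosh_lt_cosh]
        rw [abs_of_nonneg (by simp at ha; linarith), abs_of_nonneg (by simp at hb; linarith)]
        linarith
      have hch1 : (1:ℝ) ≤ cosh (a/2) := one_le_cosh _
      have harg : cos (π / (k i : ℝ)) / cosh (b/2) < cos (π / (k i : ℝ)) / cosh (a/2) :=
        div_lt_div_of_pos_left (hcos i) (by linarith) hch
      have := strictMonoOn_arcsin (hmem i (b/2)) (hmem i (a/2)) harg
      linarith
  -- continuity
  have hcont : Continuous f := by
    apply continuous_finset_sum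
    intro i _
    exact continuous_const.mul (Real.continuous_arcsin.comp
      (continuous_const.div (Real.continuous_cosh.comp (continuous_id.div_const 2))
        (fun x => (cosh_pos _).ne')))
  -- value at 0
  have hf0 : f 0 = ∑ i, ((k i : ℝ) - 2) * π / (k i : ℝ) := by
    apply Finset.sum_congr rfl
    intro i _
    have h1 : cosh ((0:ℝ)/2) = 1 := by norm_num
    rw [h1, div_one]
    have h2 : cos (π / (k i : ℝ)) = sin (π/2 - π / (k i : ℝ)) := by
      rw [sin_pi_div_two_sub]
    rw [h2, arcsin_sin (by linarith [(hang i).2, pi_pos]) (by linarith [(hang i).1])]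
    have hne : (k i:ℝ) ≠ 0 := (hkpos i).ne'
    field_simp
  -- tendsto 0 at top
  have hcosh_top : Tendsto (fun l : ℝ => cosh (l/2)) atTop atTop := by
    have h1 : Tendsto (fun x:ℝ => exp (x/2) / 2) atTop atTop :=
      (tendsto_exp_atTop.comp (tendsto_id.atTop_div_const two_pos)).atTop_div_const two_pos
    apply tendsto_atTop_mono _ h1
    intro x
    show exp (x/2) / 2 ≤ cosh (x/2)
    rw [Real.cosh_eq]
    have := Real.exp_pos (-(x/2))
    gcongr
    linarith
  have htend : Tendsto f atTop (nhds 0) := by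
    have : Tendsto f atTop (nhds (∑ i : Fin d, (0:ℝ))) := by
      apply tendsto_finset_sum
      intro i _
      have h1 : Tendsto (fun l : ℝ => cos (π / (k i : ℝ)) / cosh (l/2)) atTop (nhds 0) :=
        Tendsto.div_atTop tendsto_const_nhds hcosh_top
      have h2 := (Real.continuous_arcsin.tendsto 0).comp h1
      rw [Real.arcsin_zero] at h2
      simpa using (h2.const_mul 2)
    simpa using this
  -- find L > 0 with f L < 2π
  obtain ⟨L, hL0, hLlt⟩ : ∃ L, 0 < L ∧ f L < 2 * π := by
    have h1 : ∀ᶠ l in atTop, f l < 2 * π :=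
      htend.eventually (tendsto_id.eventually_lt_const (by positivity))
    have h2 : ∀ᶠ l : ℝ in atTop, 0 < l := eventually_gt_atTop 0
    exact ((h2.and h1).exists).imp (fun l h => ⟨h.1, h.2⟩)
  -- IVT
  have hfL0 : f L ≤ 2 * π := hLlt.le
  have hf0gt : 2 * π < f 0 := by rw [hf0]; exact hsum
  obtain ⟨l, hl, hfl⟩ : ∃ l ∈ Set.Icc (0:ℝ) L, f l = 2 * π := by
    have := intermediate_value_Icc' hL0.le (hcont.continuousOn (s := Set.Icc 0 L))
    have hmemv : (2*π) ∈ Set.Icc (f L) (f 0) := ⟨hfL0, hf0gt.le⟩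
    obtain ⟨l, hl, hfl⟩ := this hmemv
    exact ⟨l, hl, hfl⟩
  have hlpos : 0 < l := by
    rcases hl.1.lt_or_eq with h | h
    · exact h
    · exfalso; rw [← h] at hfl; linarith
  refine ⟨l, ⟨hlpos, hfl⟩, ?_⟩
  rintro y ⟨hy0, hyeq⟩
  exact hanti.injOn (Set.mem_Ici.mpr hy0.le) (Set.mem_Ici.mpr hlpos.le) (hyeq.trans hfl.symm)
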